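/- Let B be a nondegenerate symmetric bilinear form on a real Hilbert space H which is realized by a compact perturbation of a positive isomorphism (so that n⁻(B) < ∞), and let Z ⊆ H be an isotropic subspace for B (B vanishes on Z × Z). Then n⁻(B) = n⁻(B|_{Z^{⊥_B}}) + dim(Z). -/

import Mathlib

open scoped RealInnerProductSpace

/-- The coindex of (the restriction to `W` of) a form `B`: the largest dimension of a
subspace contained in `W` on which `B` is positive definite. -/
noncomputable def posIndexOn {V : Type*} [AddCommGroup V] [Module ℝ V]
    (B : V → V → ℝ) (W : Set V) : ℕ :=
  sSup {n : ℕ | ∃ S : Submodule ℝ V, (S : Set V) ⊆ W ∧ Module.finrank ℝ S = n ∧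
    ∀ x ∈ S, x ≠ 0 → 0 < B x x}

/-- The index of (the restriction to `W` of) a form `B`. -/
noncomputable def negIndexOn {V : Type*} [AddCommGroup V] [Module ℝ V]
    (B : V → V → ℝ) (W : Set V) : ℕ :=
  sSup {n : ℕ | ∃ S : Submodule ℝ V, (S : Set V) ⊆ W ∧ Module.finrank ℝ S = n ∧
    ∀ x ∈ S, x ≠ 0 → B x x < 0}

open Module

section FR
variable {H : Type*} [NormedAddCommGroup H] [InnerProductSpace ℝ H] [CompleteSpace H]

lemma my_exists_finrank_approx (K : H →L[ℝ] H) (hK : IsCompactOperator ⇑K) {ε : ℝ} (hε : 0 < ε) :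
    ∃ (V : Submodule ℝ H) (F : H →ₗ[ℝ] V), FiniteDimensional ℝ V ∧
      ∀ x : H, ‖K x - (F x : H)‖ ≤ ε * ‖x‖ := by
  have hcl : IsCompact (closure (⇑K '' Metric.closedBall 0 1)) :=
    hK.isCompact_closure_image_closedBall 1
  have htb : TotallyBounded (⇑K '' Metric.closedBall 0 1) :=
    hcl.totallyBounded.subset subset_closure
  obtain ⟨t, htf, hsub⟩ := Metric.totallyBounded_iff.mp htb ε hε
  set V := Submodule.span ℝ t with hV
  haveI hfd : FiniteDimensional ℝ V := FiniteDimensional.span_of_finite ℝ htf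
  haveI : CompleteSpace V := FiniteDimensional.complete ℝ V
  refine ⟨V, (V.orthogonalProjectionOnto).toLinearMap.comp K.toLinearMap, hfd, ?_⟩
  have key : ∀ x : H, ‖x‖ ≤ 1 → ‖K x - (V.orthogonalProjectionOnto (K x) : H)‖ ≤ ε := by
    intro x hx
    have hKx : K x ∈ ⋃ y ∈ t, Metric.ball y ε :=
      hsub ⟨x, Metric.mem_closedBall.mpr (by simpa using hx), rfl⟩
    simp only [Set.mem_iUnion, Metric.mem_ball] at hKx
    obtain ⟨y, hyt, hy⟩ := hKx
    have hyV : y ∈ V := Submodule.subset_span hyt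
    rw [show (V.orthogonalProjectionOnto (K x) : H) = V.starProjection (K x) from rfl,
      Submodule.starProjection_minimal (U := V) (K x)]
    refine le_trans (ciInf_le ⟨0, fun z hz => ?_⟩ (⟨y, hyV⟩ : V)) ?_
    · obtain ⟨w, rfl⟩ := hz; positivity
    · exact le_of_lt (by simpa [dist_eq_norm] using hy)
  intro x
  rcases eq_or_ne x 0 with rfl | hx0
  · simp
  · have hn : (0:ℝ) < ‖x‖ := norm_pos_iff.mpr hx0
    have hu : ‖(‖x‖⁻¹ • x)‖ ≤ 1 := by
      rw [norm_smul, norm_inv, norm_norm, inv_mul_cancel₀ hn.ne']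
    have hk := key (‖x‖⁻¹ • x) hu
    have heq : K x - (V.orthogonalProjectionOnto (K x) : H)
        = ‖x‖ • (K (‖x‖⁻¹ • x) - (V.orthogonalProjectionOnto (K (‖x‖⁻¹ • x)) : H)) := by
      rw [map_smul, map_smul, smul_sub]
      simp [smul_smul, mul_inv_cancel₀ hn.ne']
    simp only [LinearMap.comp_apply, ContinuousLinearMap.coe_coe]
    rw [heq, norm_smul, norm_norm, mul_comm]
    exact mul_le_mul_of_nonneg_right hk hn.le

end FR

section FR2
variable {H : Type*} [NormedAddCommGroup H] [InnerProductSpace ℝ H] [CompleteSpace H]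

lemma my_dim_bound (Sop P K : H →L[ℝ] H) (hSPK : Sop = P + K)
    {c : ℝ} (hc : 0 < c) (hP : ∀ x : H, c * ‖x‖ ^ 2 ≤ ⟪P x, x⟫) (hK : IsCompactOperator ⇑K) :
    ∃ D : ℕ, ∀ E : Submodule ℝ H, (∀ x ∈ E, ⟪Sop x, x⟫ ≤ 0) →
      FiniteDimensional ℝ E ∧ finrank ℝ E ≤ D := by
  obtain ⟨V, F, hVfd, hF⟩ := my_exists_finrank_approx K hK (half_pos hc)
  refine ⟨finrank ℝ V, fun E hE => ?_⟩
  let g : E →ₗ[ℝ] V := F.comp E.subtype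
  have hginj : Function.Injective g := by
    rw [← LinearMap.ker_eq_bot, LinearMap.ker_eq_bot']
    intro m hm
    have hm' : F (m : H) = 0 := hm
    -- show (m : H) = 0
    have h1 : c * ‖(m:H)‖ ^ 2 ≤ ⟪P (m:H), (m:H)⟫ := hP _
    have h2 : ⟪P (m:H), (m:H)⟫ = ⟪Sop (m:H), (m:H)⟫ - ⟪K (m:H), (m:H)⟫ := by
      rw [hSPK]; simp [inner_sub_left, inner_add_left]
    have h3 : ⟪Sop (m:H), (m:H)⟫ ≤ 0 := hE _ m.2
    have h4 : ⟪K (m:H), (m:H)⟫ = ⟪K (m:H) - (F (m:H) : H), (m:H)⟫ := by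
      rw [hm']; simp
    have h5 : |⟪K (m:H) - (F (m:H) : H), (m:H)⟫| ≤ (c/2) * ‖(m:H)‖ * ‖(m:H)‖ := by
      refine le_trans (abs_real_inner_le_norm _ _) ?_
      exact mul_le_mul_of_nonneg_right (hF _) (norm_nonneg _)
    have h6 : c * ‖(m:H)‖ ^ 2 ≤ (c/2) * ‖(m:H)‖ ^ 2 := by
      have := (abs_le.mp h5).1
      nlinarith [h1, h2, h3]
    have h7 : ‖(m:H)‖ ^ 2 ≤ 0 := by nlinarith
    have : (m:H) = 0 := by
      have := norm_nonneg (m:H)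
      have hn0 : ‖(m:H)‖ = 0 := by nlinarith
      exact norm_eq_zero.mp hn0
    exact Subtype.ext this
  haveI hEfd : FiniteDimensional ℝ E := FiniteDimensional.of_injective g hginj
  exact ⟨hEfd, LinearMap.finrank_le_finrank_of_injective hginj⟩

end FR2

section Beta
variable {H : Type*} [NormedAddCommGroup H] [InnerProductSpace ℝ H] [CompleteSpace H]

variable (S : H →L[ℝ] H) (Z : Submodule ℝ H)

/-- The pairing map `y ↦ (z ↦ ⟪S z, y⟫)`. -/
noncomputable def myBeta : H →ₗ[ℝ] Module.Dual ℝ Z where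
  toFun y :=
    { toFun := fun z => ⟪S (z : H), y⟫
      map_add' := fun a b => by simp [inner_add_left]
      map_smul' := fun r a => by simp [inner_smul_left] }
  map_add' a b := by ext z; simp [inner_add_right]
  map_smul' r a := by ext z; simp [inner_smul_right]

@[simp] lemma myBeta_apply (y : H) (z : Z) : myBeta S Z y z = ⟪S (z : H), y⟫ := rfl

lemma myBeta_surjective [FiniteDimensional ℝ Z]
    (hnd : ∀ x : H, (∀ y : H, ⟪S x, y⟫ = 0) → x = 0) :
    Function.Surjective (myBeta S Z) := by
  rw [← LinearMap.range_eq_top]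
  by_contra hne
  obtain ⟨f, hf0, hfmap⟩ :=
    Submodule.exists_dual_map_eq_bot_of_lt_top (lt_top_iff_ne_top.mpr hne) inferInstance
  set z : Z := (Module.evalEquiv ℝ Z).symm f with hz
  have hzero : ∀ y : H, ⟪S (z : H), y⟫ = 0 := by
    intro y
    have hmem : myBeta S Z y ∈ LinearMap.range (myBeta S Z) := LinearMap.mem_range_self _ _
    have : f (myBeta S Z y) = 0 := by
      have : f (myBeta S Z y) ∈ Submodule.map f (LinearMap.range (myBeta S Z)) :=
        Submodule.mem_map_of_mem hmem
      rwa [hfmap, Submodule.mem_bot] at this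
    have h2 : myBeta S Z y ((Module.evalEquiv ℝ Z).symm f) = f (myBeta S Z y) :=
      Module.apply_evalEquiv_symm_apply (R := ℝ) (M := Z) _ f
    rw [← hz] at h2
    rw [myBeta_apply] at h2
    rw [h2, this]
  have hz0 : (z : H) = 0 := hnd _ hzero
  have : z = 0 := Subtype.ext hz0
  apply hf0
  have h3 : (Module.evalEquiv ℝ Z).symm f = 0 := by rw [← hz, this]
  have := congrArg (Module.evalEquiv ℝ Z) h3
  simpa using this
end Beta

section Lam
variable {H : Type*} [NormedAddCommGroup H] [InnerProductSpace ℝ H]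

lemma my_exists_lam (S : H →L[ℝ] H) (E : Submodule ℝ H) [FiniteDimensional ℝ E]
    (hneg : ∀ x ∈ E, x ≠ 0 → ⟪S x, x⟫ < 0) :
    ∃ lam : ℝ, 0 < lam ∧ ∀ e ∈ E, ⟪S e, e⟫ ≤ -lam * ‖e‖ ^ 2 := by
  by_cases hbot : E = ⊥
  · refine ⟨1, one_pos, fun e he => ?_⟩
    rw [hbot, Submodule.mem_bot] at he
    simp [he]
  · haveI : Nontrivial E := Submodule.nontrivial_iff_ne_bot.mpr hbot
    haveI : ProperSpace E := FiniteDimensional.proper ℝ E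
    have hsne : (Metric.sphere (0:E) 1).Nonempty := NormedSpace.sphere_nonempty.mpr zero_le_one
    have hcont : Continuous fun e : E => ⟪S (e : H), (e : H)⟫ := by
      exact Continuous.inner (S.continuous.comp continuous_subtype_val) continuous_subtype_val
    obtain ⟨e₁, he₁s, he₁max⟩ :=
      (isCompact_sphere (0:E) 1).exists_isMaxOn hsne hcont.continuousOn
    have he₁n : ‖(e₁ : H)‖ = 1 := by
      have : ‖e₁‖ = 1 := by simpa using he₁s
      simpa using this
    have he₁0 : (e₁ : H) ≠ 0 := by
      intro h; rw [h] at he₁n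
      norm_num at he₁n
    set μ : ℝ := ⟪S (e₁ : H), (e₁ : H)⟫ with hμ
    have hμneg : μ < 0 := hneg _ e₁.2 he₁0
    refine ⟨-μ, by linarith, fun e he => ?_⟩
    rcases eq_or_ne e 0 with rfl | he0
    · simp
    · have hn : (0:ℝ) < ‖e‖ := norm_pos_iff.mpr he0
      set u : E := ‖e‖⁻¹ • (⟨e, he⟩ : E) with hu
      have hus : u ∈ Metric.sphere (0:E) 1 := by
        simp only [Metric.mem_sphere, dist_zero_right, hu, norm_smul, norm_inv, norm_norm]
        show ‖e‖⁻¹ * ‖(⟨e, he⟩ : E)‖ = 1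
        have : ‖(⟨e, he⟩ : E)‖ = ‖e‖ := rfl
        rw [this, inv_mul_cancel₀ hn.ne']
      have hle : ⟪S (u : H), (u : H)⟫ ≤ μ := he₁max hus
      have hcalc : ⟪S (u : H), (u : H)⟫ = ‖e‖⁻¹ ^ 2 * ⟪S e, e⟫ := by
        have : (u : H) = ‖e‖⁻¹ • e := rfl
        rw [this, map_smul, real_inner_smul_left, real_inner_smul_right]
        ring
      rw [hcalc] at hle
      have h2 : ⟪S e, e⟫ ≤ μ * ‖e‖ ^ 2 := by
        have := mul_le_mul_of_nonneg_left hle (by positivity : (0:ℝ) ≤ ‖e‖ ^ 2)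
        calc ⟪S e, e⟫ = ‖e‖ ^ 2 * (‖e‖⁻¹ ^ 2 * ⟪S e, e⟫) := by
              field_simp
          _ ≤ ‖e‖ ^ 2 * μ := this
          _ = μ * ‖e‖ ^ 2 := by ring
      linarith [h2]

end Lam

section Construct
variable {H : Type*} [NormedAddCommGroup H] [InnerProductSpace ℝ H] [CompleteSpace H]

set_option maxHeartbeats 1000000 in
lemma my_construct (S : H →L[ℝ] H)
    (hS : ∀ x y : H, ⟪S x, y⟫ = ⟪x, S y⟫)
    (hnd : ∀ x : H, (∀ y : H, ⟪S x, y⟫ = 0) → x = 0)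
    (Z : Submodule ℝ H) [FiniteDimensional ℝ Z]
    (hiso : ∀ x ∈ Z, ∀ y ∈ Z, ⟪S x, y⟫ = 0)
    (E : Submodule ℝ H) [FiniteDimensional ℝ E]
    (hEW : (E : Set H) ⊆ ↑(Submodule.comap (S : H →ₗ[ℝ] H) Zᗮ))
    (hneg : ∀ x ∈ E, x ≠ 0 → ⟪S x, x⟫ < 0) :
    ∃ E' : Submodule ℝ H, finrank ℝ E' = finrank ℝ E + finrank ℝ Z ∧
      ∀ x ∈ E', x ≠ 0 → ⟪S x, x⟫ < 0 := by
  classical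
  obtain ⟨k, hk⟩ : ∃ k : ℕ, finrank ℝ Z = k := ⟨_, rfl⟩
  have b : Basis (Fin k) ℝ Z := (Module.finBasis ℝ Z).reindex (finCongr hk)
  -- dual vectors
  have hsurj := myBeta_surjective S Z hnd
  choose η hη using fun j : Fin k => hsurj (b.coord j)
  have hδ : ∀ i j : Fin k, ⟪S ((b i : Z) : H), η j⟫ = if i = j then 1 else 0 := by
    intro i j
    have h1 : myBeta S Z (η j) (b i) = b.coord j (b i) := by rw [hη j]
    rw [myBeta_apply] at h1
    rw [h1, Basis.coord_apply, Basis.repr_self_apply]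
  -- symmetry of the form
  have hsymm : ∀ x y : H, ⟪S x, y⟫ = ⟪S y, x⟫ := fun x y => by
    rw [hS, real_inner_comm]
  -- the form vanishes between E and Z
  have hEZ : ∀ x ∈ E, ∀ w ∈ Z, ⟪S x, w⟫ = 0 := by
    intro x hx w hw
    have hmem : S x ∈ Zᗮ := by
      have := hEW hx
      simpa [Submodule.mem_comap] using this
    rw [real_inner_comm]
    exact hmem w hw
  -- operator norm bound
  have hbound : ∀ x y : H, |⟪S x, y⟫| ≤ ‖S‖ * ‖x‖ * ‖y‖ := by
    intro x y
    refine le_trans (abs_real_inner_le_norm _ _) ?_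
    exact mul_le_mul_of_nonneg_right (S.le_opNorm x) (norm_nonneg _)
  obtain ⟨lam, hlam, hlamE⟩ := my_exists_lam S E hneg
  set Cτ : ℝ := ∑ j : Fin k, ‖η j‖ with hCτ
  have hCτ0 : 0 ≤ Cτ := Finset.sum_nonneg fun j _ => norm_nonneg _
  set C₁ : ℝ := ‖S‖ * Cτ with hC₁
  have hC₁0 : 0 ≤ C₁ := mul_nonneg (norm_nonneg _) hCτ0
  set C₂ : ℝ := ‖S‖ * Cτ ^ 2 with hC₂
  have hC₂0 : 0 ≤ C₂ := mul_nonneg (norm_nonneg _) (sq_nonneg _)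
  set t : ℝ := (C₂ + 2 * C₁ ^ 2 / lam + 2) / 2 with ht
  have ht0 : 0 < t := by positivity
  set v : Fin k → H := fun j => t • ((b j : Z) : H) - η j with hv
  set lc : (Fin k → ℝ) →ₗ[ℝ] H := Fintype.linearCombination ℝ v with hlc
  set ℓ : (E × (Fin k → ℝ)) →ₗ[ℝ] H :=
    E.subtype.comp (LinearMap.fst ℝ E (Fin k → ℝ)) + lc.comp (LinearMap.snd ℝ E (Fin k → ℝ))
    with hℓ
  have hℓapp : ∀ (e : E) (a : Fin k → ℝ), ℓ (e, a) = (e : H) + ∑ j, a j • v j := by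
    intro e a
    simp [hℓ, hlc, Fintype.linearCombination_apply]
  clear_value Cτ C₁ C₂ t v lc ℓ
  -- the key estimate
  have hkey : ∀ (e : E) (a : Fin k → ℝ), (e, a) ≠ 0 → ⟪S (ℓ (e, a)), ℓ (e, a)⟫ < 0 := by
    intro e a hne
    set za : H := ∑ j, a j • ((b j : Z) : H) with hza
    set ηa : H := ∑ j, a j • η j with hηa
    have hzaZ : za ∈ Z := Submodule.sum_mem _ fun j _ => Submodule.smul_mem _ _ (b j).2
    have hw : ∑ j, a j • v j = t • za - ηa := by
      rw [hza, hηa, Finset.smul_sum, ← Finset.sum_sub_distrib]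
      refine Finset.sum_congr rfl fun j _ => ?_
      rw [hv]
      simp [smul_sub, smul_comm (a j) t]
    rw [hℓapp, hw]
    set x : H := (e : H) + (t • za - ηa) with hx
    clear_value za ηa x
    -- expand the quadratic form
    have hf4 : ⟪S za, ηa⟫ = ∑ j, a j ^ 2 := by
      rw [hza]
      rw [map_sum, sum_inner]
      have : ∀ i : Fin k, ⟪S (a i • ((b i : Z) : H)), ηa⟫ = a i * a i := by
        intro i
        rw [map_smul, real_inner_smul_left, hηa, inner_sum]
        have : ∀ j : Fin k, ⟪S ((b i : Z) : H), a j • η j⟫ = a j * (if i = j then 1 else 0) := by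
          intro j
          rw [real_inner_smul_right, hδ]
        rw [Finset.sum_congr rfl fun j _ => this j]
        simp
      rw [Finset.sum_congr rfl fun i _ => this i]
      refine Finset.sum_congr rfl fun i _ => by ring
    have hf3 : ⟪S za, za⟫ = 0 := hiso _ hzaZ _ hzaZ
    have hf2 : ⟪S (e : H), za⟫ = 0 := hEZ _ e.2 _ hzaZ
    have hf5 : ‖ηa‖ ≤ Cτ * ‖a‖ := by
      rw [hηa]
      refine le_trans (norm_sum_le _ _) ?_
      have : ∀ j : Fin k, ‖a j • η j‖ ≤ ‖a‖ * ‖η j‖ := by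
        intro j
        rw [norm_smul]
        exact mul_le_mul_of_nonneg_right (norm_le_pi_norm a j) (norm_nonneg _)
      refine le_trans (Finset.sum_le_sum fun j _ => this j) ?_
      rw [← Finset.mul_sum, ← hCτ, mul_comm]
    have hf7 : ‖a‖ ^ 2 ≤ ∑ j, a j ^ 2 := by
      have hs : (0:ℝ) ≤ ∑ j, a j ^ 2 := Finset.sum_nonneg fun j _ => sq_nonneg _
      have h1 : ‖a‖ ≤ Real.sqrt (∑ j, a j ^ 2) := by
        refine (pi_norm_le_iff_of_nonneg (Real.sqrt_nonneg _)).mpr fun j => ?_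
        rw [Real.norm_eq_abs, ← Real.sqrt_sq_eq_abs]
        exact Real.sqrt_le_sqrt (Finset.single_le_sum (fun j _ => sq_nonneg (a j)) (Finset.mem_univ j))
      calc ‖a‖ ^ 2 ≤ Real.sqrt (∑ j, a j ^ 2) ^ 2 := by nlinarith [norm_nonneg a]
        _ = ∑ j, a j ^ 2 := Real.sq_sqrt hs
    -- expansion
    have hexp : ⟪S x, x⟫
        = ⟪S (e:H), (e:H)⟫ - 2 * ⟪S (e:H), ηa⟫ - 2 * t * (∑ j, a j ^ 2) + ⟪S ηa, ηa⟫ := by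
      rw [hx]
      simp only [map_add, map_sub, map_smul, inner_add_left, inner_add_right, inner_sub_left,
        inner_sub_right, real_inner_smul_left, real_inner_smul_right]
      rw [hsymm za ((e:H)), hsymm ηa ((e:H)), hsymm ηa za]
      rw [hf2, hf3, hf4]
      ring
    -- bounds
    have hb1 : ⟪S (e:H), (e:H)⟫ ≤ -lam * ‖(e:H)‖ ^ 2 := hlamE _ e.2
    have hb2 : |⟪S (e:H), ηa⟫| ≤ C₁ * ‖(e:H)‖ * ‖a‖ := by
      refine le_trans (hbound _ _) ?_
      calc ‖S‖ * ‖(e:H)‖ * ‖ηa‖ ≤ ‖S‖ * ‖(e:H)‖ * (Cτ * ‖a‖) := by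
            refine mul_le_mul_of_nonneg_left hf5 (by positivity)
        _ = C₁ * ‖(e:H)‖ * ‖a‖ := by rw [hC₁]; ring
    have hb3 : ⟪S ηa, ηa⟫ ≤ C₂ * ‖a‖ ^ 2 := by
      refine le_trans (le_abs_self _) (le_trans (hbound _ _) ?_)
      calc ‖S‖ * ‖ηa‖ * ‖ηa‖ ≤ ‖S‖ * (Cτ * ‖a‖) * (Cτ * ‖a‖) := by
            refine mul_le_mul (mul_le_mul_of_nonneg_left hf5 (norm_nonneg _)) hf5 (norm_nonneg _) ?_
            positivity
        _ = C₂ * ‖a‖ ^ 2 := by rw [hC₂]; ring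
    have hb4 : -(2 * t * (∑ j, a j ^ 2)) ≤ -(2 * t * ‖a‖ ^ 2) := by
      have := mul_le_mul_of_nonneg_left hf7 (by positivity : (0:ℝ) ≤ 2 * t)
      linarith
    -- conclude
    have habs := abs_le.mp hb2
    have hnz : 0 < (lam/2) * ‖(e:H)‖ ^ 2 + ‖a‖ ^ 2 := by
      have hor : e ≠ 0 ∨ a ≠ 0 := by
        by_contra hc
        push_neg at hc
        exact hne (by simp [hc.1, hc.2, Prod.ext_iff])
      rcases hor with h | h
      · have h' : (e : H) ≠ 0 := fun hh => h (Subtype.ext hh)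
        have h2 := norm_pos_iff.mpr h'
        have := sq_nonneg ‖a‖
        nlinarith [mul_pos hlam (mul_pos h2 h2)]
      · have h2 := norm_pos_iff.mpr h
        have := sq_nonneg ‖(e:H)‖
        nlinarith
    have hqle : ⟪S x, x⟫ ≤ -(lam/2) * ‖(e:H)‖ ^ 2 - ‖a‖ ^ 2 := by
      obtain ⟨Cd, hCdlam, h2t⟩ : ∃ Cd : ℝ, Cd * lam = 2 * C₁ ^ 2 ∧ C₂ + Cd - 2 * t = -2 :=
        ⟨2 * C₁ ^ 2 / lam, by field_simp, by rw [ht]; ring⟩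
      have hAM : 2 * (C₁ * ‖(e:H)‖ * ‖a‖) ≤ (lam/2) * ‖(e:H)‖ ^ 2 + Cd * ‖a‖ ^ 2 := by
        have h' : 2 * (C₁ * ‖(e:H)‖ * ‖a‖) * lam
            ≤ ((lam/2) * ‖(e:H)‖ ^ 2 + Cd * ‖a‖ ^ 2) * lam := by
          nlinarith [sq_nonneg (lam * ‖(e:H)‖ - 2 * C₁ * ‖a‖)]
        exact le_of_mul_le_mul_right h' hlam
      rw [hexp]
      have h2tw : (C₂ + Cd - 2*t) * ‖a‖ ^ 2 = -2 * ‖a‖ ^ 2 := by rw [h2t]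
      have hX : -(2 * ⟪S (e:H), ηa⟫) ≤ (lam/2) * ‖(e:H)‖ ^ 2 + Cd * ‖a‖ ^ 2 := by
        linarith [habs.1, hAM]
      linarith [hb1, hb3, hb4, hX, h2tw, sq_nonneg ‖a‖]
    linarith [hqle, hnz]
  -- injectivity
  have hinj : Function.Injective ℓ := by
    rw [← LinearMap.ker_eq_bot, LinearMap.ker_eq_bot']
    intro p hp
    by_contra hp0
    obtain ⟨e, a⟩ := p
    have := hkey e a hp0
    rw [hp] at this
    simp at this
  refine ⟨LinearMap.range ℓ, ?_, ?_⟩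
  · rw [LinearMap.finrank_range_of_inj hinj]
    rw [Module.finrank_prod, Module.finrank_fin_fun, hk]
  · rintro x ⟨⟨e, a⟩, rfl⟩ hx0
    have hp0 : (e, a) ≠ 0 := fun h => hx0 (by rw [h, map_zero])
    exact hkey e a hp0

end Construct

/-- **Index and isotropic subspaces.** Let `B = ⟪S·,·⟫` be a nondegenerate symmetric
bilinear form on a Hilbert space realized by a compact perturbation of a positive
isomorphism (so `n⁻(B) < ∞`), and let `Z` be an isotropic subspace for `B`. Then
`n⁻(B) = n⁻(B|_{Z^{⊥_B}}) + dim Z`. -/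
theorem index_eq_index_on_isotropic_perp_add_dim
    {H : Type*} [NormedAddCommGroup H] [InnerProductSpace ℝ H] [CompleteSpace H]
    (S : H →L[ℝ] H)
    (hS : ∀ x y : H, ⟪S x, y⟫ = ⟪x, S y⟫)
    (hRCPPI : ∃ P K : H →L[ℝ] H, S = P + K ∧
      (∀ x y : H, ⟪P x, y⟫ = ⟪x, P y⟫) ∧
      (∃ c > 0, ∀ x : H, c * ‖x‖ ^ 2 ≤ ⟪P x, x⟫) ∧
      Function.Bijective ⇑P ∧ IsCompactOperator ⇑K)
    (hnd : ∀ x : H, (∀ y : H, ⟪S x, y⟫ = 0) → x = 0)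
    (Z : Submodule ℝ H)
    (hiso : ∀ x ∈ Z, ∀ y ∈ Z, ⟪S x, y⟫ = 0) :
    negIndexOn (fun x y => ⟪S x, y⟫) Set.univ
      = negIndexOn (fun x y => ⟪S x, y⟫) ↑(Submodule.comap S.toLinearMap Zᗮ)
        + Module.finrank ℝ Z := by
  classical
  obtain ⟨P, K, hSPK, hPsym, ⟨c, hc, hP⟩, hPbij, hKcomp⟩ := hRCPPI
  obtain ⟨D, hD⟩ := my_dim_bound S P K hSPK hc hP hKcomp
  -- nonpositivity helper
  have hnonpos : ∀ (E : Submodule ℝ H), (∀ x ∈ E, x ≠ 0 → ⟪S x, x⟫ < 0) →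
      ∀ x ∈ E, ⟪S x, x⟫ ≤ 0 := by
    intro E hE x hx
    rcases eq_or_ne x 0 with rfl | hx0
    · simp
    · exact (hE x hx hx0).le
  haveI hZfd : FiniteDimensional ℝ Z :=
    (hD Z fun x hx => le_of_eq (hiso x hx x hx)).1
  set W : Submodule ℝ H := Submodule.comap (S : H →ₗ[ℝ] H) Zᗮ with hW
  rw [negIndexOn, negIndexOn]
  set 𝒜 := {n : ℕ | ∃ E : Submodule ℝ H, (E : Set H) ⊆ (Set.univ : Set H) ∧
    Module.finrank ℝ E = n ∧ ∀ x ∈ E, x ≠ 0 → (fun x y => ⟪S x, y⟫) x x < 0} with h𝒜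
  set ℬ := {n : ℕ | ∃ E : Submodule ℝ H, (E : Set H) ⊆ ↑W ∧
    Module.finrank ℝ E = n ∧ ∀ x ∈ E, x ≠ 0 → (fun x y => ⟪S x, y⟫) x x < 0} with hℬ
  have hbdd𝒜 : BddAbove 𝒜 := by
    refine ⟨D, fun n hn => ?_⟩
    obtain ⟨E, _, hfr, hneg⟩ := hn
    exact hfr ▸ (hD E (hnonpos E hneg)).2
  have hbddℬ : BddAbove ℬ := by
    refine ⟨D, fun n hn => ?_⟩
    obtain ⟨E, _, hfr, hneg⟩ := hn
    exact hfr ▸ (hD E (hnonpos E hneg)).2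
  have h0𝒜 : 0 ∈ 𝒜 := by
    refine ⟨⊥, Set.subset_univ _, finrank_bot ℝ H, fun x hx hx0 => ?_⟩
    rw [Submodule.mem_bot] at hx
    exact absurd hx hx0
  have h0ℬ : 0 ∈ ℬ := by
    refine ⟨⊥, ?_, finrank_bot ℝ H, fun x hx hx0 => ?_⟩
    · intro x hx
      have : x = 0 := by simpa using hx
      rw [this]
      exact W.zero_mem
    · rw [Submodule.mem_bot] at hx
      exact absurd hx hx0
  -- the supremum of ℬ is attained
  obtain ⟨E₀, hE₀W, hE₀fr, hE₀neg⟩ := Nat.sSup_mem ⟨0, h0ℬ⟩ hbddℬ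
  haveI hE₀fd : FiniteDimensional ℝ E₀ := (hD E₀ (hnonpos E₀ hE₀neg)).1
  refine le_antisymm ?_ ?_
  · -- ≤ : rank-nullity argument
    refine csSup_le ⟨0, h0𝒜⟩ fun n hn => ?_
    obtain ⟨E, _, hfr, hneg⟩ := hn
    haveI hEfd : FiniteDimensional ℝ E := (hD E (hnonpos E hneg)).1
    set φ : E →ₗ[ℝ] Module.Dual ℝ Z := (myBeta S Z).comp E.subtype with hφ
    have hker : ∀ y : E, y ∈ LinearMap.ker φ ↔ (y : H) ∈ W := by
      intro y
      constructor
      · intro hy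
        have h1 : ∀ z : Z, ⟪S (z : H), (y : H)⟫ = 0 := by
          intro z
          have := LinearMap.congr_fun (LinearMap.mem_ker.mp hy) z
          simpa [hφ, myBeta_apply] using this
        rw [hW, Submodule.mem_comap]
        intro u hu
        have := h1 ⟨u, hu⟩
        rw [hS] at this
        simpa using this
      · intro hy
        rw [LinearMap.mem_ker]
        ext z
        simp only [hφ, LinearMap.comp_apply, myBeta_apply, LinearMap.zero_apply]
        rw [hS]
        rw [hW, Submodule.mem_comap] at hy
        have h2 := (Submodule.mem_orthogonal _ _).mp hy (z : H) z.2
        simpa using h2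
    have hrn : Module.finrank ℝ (LinearMap.range φ) + Module.finrank ℝ (LinearMap.ker φ)
        = Module.finrank ℝ E := LinearMap.finrank_range_add_finrank_ker φ
    have hrange : Module.finrank ℝ (LinearMap.range φ) ≤ Module.finrank ℝ Z := by
      refine le_trans (Submodule.finrank_le _) ?_
      rw [Subspace.dual_finrank_eq]
    have hkerle : Module.finrank ℝ (LinearMap.ker φ) ≤ sSup ℬ := by
      set E₁ : Submodule ℝ H := (LinearMap.ker φ).map E.subtype with hE₁
      have hfr1 : Module.finrank ℝ E₁ = Module.finrank ℝ (LinearMap.ker φ) :=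
        Submodule.finrank_map_subtype_eq E (LinearMap.ker φ)
      have hmem : Module.finrank ℝ E₁ ∈ ℬ := by
        refine ⟨E₁, ?_, rfl, fun x hx hx0 => ?_⟩
        · rintro x ⟨y, hy, rfl⟩
          exact (hker y).mp hy
        · obtain ⟨y, hy, rfl⟩ := hx
          exact hneg _ y.2 hx0
      exact hfr1 ▸ le_csSup hbddℬ hmem
    omega
  · -- ≥ : construction
    obtain ⟨E', hfr', hneg'⟩ := my_construct S hS hnd Z hiso E₀ hE₀W hE₀neg
    have hmem : sSup ℬ + Module.finrank ℝ Z ∈ 𝒜 := by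
      refine ⟨E', Set.subset_univ _, ?_, hneg'⟩
      rw [hfr', hE₀fr]
    exact le_csSup hbdd𝒜 hmem
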